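/- Let E be a pseudo effect algebra satisfying (RDP). If m₁ and m₂ are σ-additive measures on E, then the lattice operations m₁ ⋁ m₂ and m₁ ⋀ m₂ in J(E) are again σ-additive measures. -/
import Mathlib


/-- A pseudo effect algebra: a partial algebra `(E; +, 0, 1)` where the partial
addition is encoded as `padd : E → E → Option E` (`padd a b = some c` means
`a + b` is defined and equals `c`). -/
class PseudoEffectAlgebra (E : Type) where
  padd : E → E → Option E
  pzero : E
  pone : E
  /-- (i) `a+b` and `(a+b)+c` exist iff `b+c` and `a+(b+c)` exist ... -/
  assoc_defined : ∀ a b c : E,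
    (∃ x, padd a b = some x ∧ (padd x c).isSome) ↔
      (∃ y, padd b c = some y ∧ (padd a y).isSome)
  /-- ... and in this case `(a+b)+c = a+(b+c)`. -/
  assoc_eq : ∀ a b c x y : E, padd a b = some x → padd b c = some y →
    padd x c = padd a y
  /-- (ii) there is exactly one `d` with `a + d = 1`. -/
  exists_unique_right : ∀ a : E, ∃! d, padd a d = some pone
  /-- (ii) there is exactly one `e` with `e + a = 1`. -/
  exists_unique_left : ∀ a : E, ∃! e, padd e a = some pone
  /-- (iii) if `a+b` exists, there are `d, e` with `a+b = d+a = b+e`. -/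
  shift : ∀ a b c : E, padd a b = some c →
    ∃ d e, padd d a = some c ∧ padd b e = some c
  /-- (iv) if `1+a` exists then `a = 0`. -/
  one_add : ∀ a : E, (padd pone a).isSome → a = pzero
  /-- (iv) if `a+1` exists then `a = 0`. -/
  add_one : ∀ a : E, (padd a pone).isSome → a = pzero

namespace PseudoEffectAlgebra

variable {E : Type} [PseudoEffectAlgebra E]

/-- The induced partial order: `a ≤ b` iff `b = a + c` for some `c ∈ E`. -/
def pLe (a b : E) : Prop := ∃ c, padd a c = some b

/-- The Riesz Decomposition Property (RDP). -/
def RDP (E : Type) [PseudoEffectAlgebra E] : Prop :=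
  ∀ a₁ a₂ b₁ b₂ c : E, padd a₁ a₂ = some c → padd b₁ b₂ = some c →
    ∃ d₁ d₂ d₃ d₄ : E, padd d₁ d₂ = some a₁ ∧ padd d₃ d₄ = some a₂ ∧
      padd d₁ d₃ = some b₁ ∧ padd d₂ d₄ = some b₂

/-- A signed measure on `E`. -/
def IsSignedMeasure (m : E → ℝ) : Prop :=
  ∀ a b c : E, padd a b = some c → m c = m a + m b

/-- A (positive) measure on `E`. -/
def IsMeasure (m : E → ℝ) : Prop :=
  IsSignedMeasure m ∧ ∀ a : E, 0 ≤ m a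

/-- A state on `E`. -/
def IsState (s : E → ℝ) : Prop := IsMeasure s ∧ s pone = 1

/-- A Jordan signed measure: a difference of two measures. -/
def IsJordan (m : E → ℝ) : Prop :=
  ∃ m₁ m₂ : E → ℝ, IsMeasure m₁ ∧ IsMeasure m₂ ∧ m = m₁ - m₂

/-- `m ≤⁺ m'` iff `m' - m` is a (positive) measure. -/
def MLe (m m' : E → ℝ) : Prop := IsMeasure (m' - m)

/-- The (partial) sum `x₁ + ⋯ + xₙ` of a nonempty list of elements of `E`. -/
def lsum : List E → Option E
  | [] => some pzero
  | [a] => some a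
  | a :: b :: l => (lsum (b :: l)).bind (fun s => padd a s)

/-- `m` is the supremum, in the po-group `J(E)` of Jordan signed measures ordered
by `≤⁺`, of the set `S`. -/
def IsSupIn (S : Set (E → ℝ)) (m : E → ℝ) : Prop :=
  IsJordan m ∧ (∀ t ∈ S, MLe t m) ∧
    ∀ h : E → ℝ, IsJordan h → (∀ t ∈ S, MLe t h) → MLe m h

/-- `m` is the infimum, in the po-group `J(E)` of Jordan signed measures ordered
by `≤⁺`, of the set `S`. -/
def IsInfIn (S : Set (E → ℝ)) (m : E → ℝ) : Prop :=
  IsJordan m ∧ (∀ t ∈ S, MLe m t) ∧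
    ∀ h : E → ℝ, IsJordan h → (∀ t ∈ S, MLe h t) → MLe h m

/-- `b` is the least upper bound (in the order of `E`) of the set `S ⊆ E`. -/
def IsLubE (S : Set E) (b : E) : Prop :=
  (∀ a ∈ S, pLe a b) ∧ ∀ c : E, (∀ a ∈ S, pLe a c) → pLe b c

/-- A σ-additive signed measure: if `a₁ ≤ a₂ ≤ ⋯` and `a = ⋁ₙ aₙ` exists in `E`,
then `m(a) = limₙ m(aₙ)`. -/
def SigmaAdditive (m : E → ℝ) : Prop :=
  ∀ (a : ℕ → E) (b : E), (∀ n, pLe (a n) (a (n + 1))) → IsLubE (Set.range a) b →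
    Filter.Tendsto (fun n => m (a n)) Filter.atTop (nhds (m b))

theorem measure_mono {m : E → ℝ} (hm : IsMeasure m) {a b : E} (h : pLe a b) :
    m a ≤ m b := by
  obtain ⟨c, hc⟩ := h
  have := hm.1 a c b hc
  linarith [hm.2 c]

theorem measure_zero' : IsMeasure (0 : E → ℝ) :=
  ⟨fun a b c _ => by simp, fun a => le_refl 0⟩

theorem measure_add' {m m' : E → ℝ} (hm : IsMeasure m) (hm' : IsMeasure m') :
    IsMeasure (m + m') := by
  refine ⟨fun a b c hc => ?_, fun a => ?_⟩
  · have := hm.1 a b c hc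
    have := hm'.1 a b c hc
    simp only [Pi.add_apply]
    linarith
  · have := hm.2 a
    have := hm'.2 a
    simp only [Pi.add_apply]
    linarith

/-- If `m` is a measure and `v - m` is a measure, then `v` is a measure. -/
theorem measure_of_mle {m v : E → ℝ} (hm : IsMeasure m) (h : MLe m v) :
    IsMeasure v := by
  refine ⟨fun a b c hc => ?_, fun a => ?_⟩
  · have h1 := hm.1 a b c hc
    have h2 := h.1 a b c hc
    simp only [Pi.sub_apply] at h2
    linarith
  · have h1 := h.2 a
    have h2 := hm.2 a
    simp only [Pi.sub_apply] at h1
    linarith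

/-- Squeeze lemma: if `v` and `u` are measures and `v + u` is σ-additive,
then `v` is σ-additive. -/
theorem sigma_squeeze {v u : E → ℝ} (hv : IsMeasure v) (hu : IsMeasure u)
    (hp : SigmaAdditive (v + u)) : SigmaAdditive v := by
  intro a b hmono hlub
  have hle : ∀ n, pLe (a n) b := fun n => hlub.1 _ ⟨n, rfl⟩
  have h1 : ∀ n, v (a n) + u (a n) - u b ≤ v (a n) := by
    intro n
    have := measure_mono hu (hle n)
    linarith
  have h2 : ∀ n, v (a n) ≤ v b := fun n => measure_mono hv (hle n)
  have ht := hp a b hmono hlub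
  have ht' : Filter.Tendsto (fun n => v (a n) + u (a n) - u b)
      Filter.atTop (nhds (v b)) := by
    have := ht.sub_const (u b)
    simp only [Pi.add_apply] at this
    simpa using this
  exact tendsto_of_tendsto_of_tendsto_of_le_of_le ht' tendsto_const_nhds h1 h2

/-- Proposition 4.5: if `m₁, m₂` are σ-additive measures on a
pseudo effect algebra with (RDP), then `m₁ ⋁ m₂` and `m₁ ⋀ m₂` (the lattice
operations of `J(E)`) are again σ-additive measures. -/
theorem stmt11 (hRDP : RDP E) (m₁ m₂ : E → ℝ)
    (h₁ : IsMeasure m₁) (h₂ : IsMeasure m₂)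
    (hσ₁ : SigmaAdditive m₁) (hσ₂ : SigmaAdditive m₂) :
    (∀ v : E → ℝ, IsSupIn {m₁, m₂} v → IsMeasure v ∧ SigmaAdditive v) ∧
    (∀ w : E → ℝ, IsInfIn {m₁, m₂} w → IsMeasure w ∧ SigmaAdditive w) := by
  have hJ0 : IsJordan (0 : E → ℝ) := ⟨m₁, m₁, h₁, h₁, (sub_self m₁).symm⟩
  have hM12 : IsMeasure (m₁ + m₂) := measure_add' h₁ h₂
  have hJ12 : IsJordan (m₁ + m₂) :=
    ⟨m₁ + m₂, 0, hM12, measure_zero', (sub_zero _).symm⟩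
  have hσ12 : SigmaAdditive (m₁ + m₂) := by
    intro a b hmono hlub
    have := (hσ₁ a b hmono hlub).add (hσ₂ a b hmono hlub)
    simpa using this
  constructor
  · intro v hv
    obtain ⟨hJ, hub, hleast⟩ := hv
    have hvm : IsMeasure v :=
      measure_of_mle h₁ (hub m₁ (by simp))
    have hub12 : ∀ t ∈ ({m₁, m₂} : Set (E → ℝ)), MLe t (m₁ + m₂) := by
      intro t ht
      rcases ht with rfl | ht
      · unfold MLe
        rw [add_sub_cancel_left]
        exact h₂
      · rcases ht with rfl
        unfold MLe
        rw [add_sub_cancel_right]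
        exact h₁
    have hvle : MLe v (m₁ + m₂) := hleast (m₁ + m₂) hJ12 hub12
    have hu : IsMeasure ((m₁ + m₂) - v) := hvle
    have heq : v + ((m₁ + m₂) - v) = m₁ + m₂ := by
      funext x
      simp only [Pi.add_apply, Pi.sub_apply]
      ring
    refine ⟨hvm, sigma_squeeze hvm hu ?_⟩
    rw [heq]
    exact hσ12
  · intro w hw
    obtain ⟨hJ, hlb, hgreat⟩ := hw
    have h0w : MLe 0 w := by
      refine hgreat 0 hJ0 ?_
      intro t ht
      have htm : IsMeasure t := by
        rcases ht with rfl | ht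
        · exact h₁
        · rcases ht with rfl; exact h₂
      unfold MLe
      rwa [sub_zero]
    have hwm : IsMeasure w := measure_of_mle measure_zero' h0w
    have hu : IsMeasure (m₁ - w) := hlb m₁ (by simp)
    have heq : w + (m₁ - w) = m₁ := by
      funext x
      simp only [Pi.add_apply, Pi.sub_apply]
      ring
    refine ⟨hwm, sigma_squeeze hwm hu ?_⟩
    rw [heq]
    exact hσ₁

end PseudoEffectAlgebra
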